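/- Let G be a finite group, H ≤ G, and let S be a simple real G-module with G-invariant inner product whose Wythoff space W = Fix_S(H) has dimension 1 over 𝔻 = End_{ℝG}(S). Then for any w ∈ W with ⟨w,w⟩ = 1 and any g ∈ G, the number (|HgH ∪ Hg⁻¹H| / |H|)·⟨w·g, w⟩ is an algebraic integer. In particular, all entries of the cosine vector ⟨w·g, w⟩ are algebraic numbers. -/

import Mathlib

open scoped InnerProductSpace

open Finset in
private lemma coset_sum_dvd {G : Type} [Group G] [DecidableEq G] (HF : Finset G)
    (h1 : (1:G) ∈ HF) (hcl : ∀ a ∈ HF, ∀ b ∈ HF, a * b⁻¹ ∈ HF)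
    (f : G → ℤ) (hf : ∀ y : G, ∀ h ∈ HF, f (y * h) = f y) :
    ∀ K : Finset G, (∀ y ∈ K, ∀ h ∈ HF, y * h ∈ K) → (HF.card : ℤ) ∣ ∑ y ∈ K, f y := by
  intro K
  induction K using Finset.strongInduction with
  | _ K ih =>
    intro hK
    rcases K.eq_empty_or_nonempty with rfl | ⟨y₀, hy₀⟩
    · simp
    · set C : Finset G := HF.image (y₀ * ·) with hC
      have hCK : C ⊆ K := by
        intro x hx
        rcases Finset.mem_image.1 hx with ⟨h, hh, rfl⟩
        exact hK y₀ hy₀ h hh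
      have hy₀C : y₀ ∈ C := Finset.mem_image.2 ⟨1, h1, by simp⟩
      have hsub : K \ C ⊂ K := Finset.sdiff_ssubset hCK ⟨y₀, hy₀C⟩
      have hclosed : ∀ y ∈ K \ C, ∀ h ∈ HF, y * h ∈ K \ C := by
        intro y hy h hh
        rcases Finset.mem_sdiff.1 hy with ⟨hyK, hyC⟩
        refine Finset.mem_sdiff.2 ⟨hK y hyK h hh, fun hcon => hyC ?_⟩
        rcases Finset.mem_image.1 hcon with ⟨h', hh', heq⟩
        refine Finset.mem_image.2 ⟨h' * h⁻¹, hcl h' hh' h hh, ?_⟩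
        have : y = y₀ * h' * h⁻¹ := by rw [heq]; group
        rw [this]; group
      have hCsum : ∑ y ∈ C, f y = (HF.card : ℤ) * f y₀ := by
        rw [hC, Finset.sum_image (by intro a _ b _ hab; exact mul_left_cancel hab)]
        rw [Finset.sum_congr rfl (fun h hh => hf y₀ h hh)]
        simp [mul_comm]
      have hsplit : ∑ y ∈ K \ C, f y + ∑ y ∈ C, f y = ∑ y ∈ K, f y :=
        Finset.sum_sdiff hCK
      rw [← hsplit, hCsum]
      exact dvd_add (ih _ hsub hclosed) (Dvd.intro _ rfl)

/-- If the Wythoff space `W = Fix_S(H)` of a simple real `G`-module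
`S` is one-dimensional over `𝔻 = End_{ℝG}(S)`, then for unit `w ∈ W` and `g ∈ G`
the number `(|HgH ∪ Hg⁻¹H|/|H|)·⟨w·g,w⟩` is an algebraic integer; in particular all
entries `⟨w·g,w⟩` of the cosine vector are algebraic numbers. -/
theorem stmt16 {G : Type} [Group G] [Finite G] (H : Subgroup G)
    {S : Type} [NormedAddCommGroup S] [InnerProductSpace ℝ S] [FiniteDimensional ℝ S]
    (ρ : Representation ℝ G S)
    (horth : ∀ g (u v : S), ⟪ρ g u, ρ g v⟫_ℝ = ⟪u, v⟫_ℝ)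
    (hnt : Nontrivial S)
    (hsimple : ∀ W : Submodule ℝ S, (∀ g, ∀ x ∈ W, ρ g x ∈ W) → W = ⊥ ∨ W = ⊤)
    (w : S) (hwfix : ∀ h ∈ H, ρ h w = w) (hnorm : ⟪w, w⟫_ℝ = 1)
    -- `W = Fix_S(H)` is one-dimensional over `𝔻`, spanned by `w`:
    (hspan : ∀ v : S, (∀ h ∈ H, ρ h v = v) →
      ∃ d : S →ₗ[ℝ] S, (∀ g, d ∘ₗ ρ g = ρ g ∘ₗ d) ∧ v = d w) :
    ∀ g : G,
      IsIntegral ℤ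
        (((Nat.card ↥(DoubleCoset.doubleCoset g (H : Set G) (H : Set G)
              ∪ DoubleCoset.doubleCoset g⁻¹ (H : Set G) (H : Set G)) : ℝ)
          / (Nat.card H : ℝ)) * ⟪ρ g w, w⟫_ℝ) ∧
      IsAlgebraic ℚ ⟪ρ g w, w⟫_ℝ := by
  intro g
  classical
  haveI : Fintype G := Fintype.ofFinite G
  haveI := hnt
  have hw0 : w ≠ 0 := by
    intro h; rw [h, inner_zero_left] at hnorm; exact one_ne_zero hnorm.symm
  set KS : Set G := DoubleCoset.doubleCoset g (H : Set G) (H : Set G)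
      ∪ DoubleCoset.doubleCoset g⁻¹ (H : Set G) (H : Set G) with hKS
  haveI : Fintype ↥KS := Fintype.ofFinite _
  haveI : Fintype ↥(H : Set G) := Fintype.ofFinite _
  set KF : Finset G := KS.toFinset with hKF
  set HF : Finset G := (H : Set G).toFinset with hHF
  have hmemH : ∀ x : G, x ∈ HF ↔ x ∈ H := by intro x; simp [hHF]
  have h1H : (1 : G) ∈ HF := (hmemH 1).2 H.one_mem
  have hclH : ∀ a ∈ HF, ∀ b ∈ HF, a * b⁻¹ ∈ HF := by
    intro a ha b hb
    exact (hmemH _).2 (H.mul_mem ((hmemH a).1 ha) (H.inv_mem ((hmemH b).1 hb)))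
  set nH : ℝ := (HF.card : ℝ) with hnH
  have hnH0 : nH ≠ 0 := by
    have : 0 < HF.card := Finset.card_pos.2 ⟨1, h1H⟩
    rw [hnH]; exact_mod_cast this.ne'
  have hmemK : ∀ x : G, x ∈ KF ↔
      ((∃ a ∈ H, ∃ b ∈ H, x = a * g * b) ∨ (∃ a ∈ H, ∃ b ∈ H, x = a * g⁻¹ * b)) := by
    intro x
    rw [hKF, Set.mem_toFinset, hKS, Set.mem_union]
    simp [DoubleCoset.mem_doubleCoset]
  have hgK : g ∈ KF := (hmemK g).2 (Or.inl ⟨1, H.one_mem, 1, H.one_mem, by group⟩)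
  have hKl : ∀ h ∈ H, ∀ x ∈ KF, h * x ∈ KF := by
    intro h hh x hx
    rcases (hmemK x).1 hx with ⟨a, ha, b, hb, rfl⟩ | ⟨a, ha, b, hb, rfl⟩
    · exact (hmemK _).2 (Or.inl ⟨h*a, H.mul_mem hh ha, b, hb, by group⟩)
    · exact (hmemK _).2 (Or.inr ⟨h*a, H.mul_mem hh ha, b, hb, by group⟩)
  have hKr : ∀ x ∈ KF, ∀ h ∈ H, x * h ∈ KF := by
    intro x hx h hh
    rcases (hmemK x).1 hx with ⟨a, ha, b, hb, rfl⟩ | ⟨a, ha, b, hb, rfl⟩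
    · exact (hmemK _).2 (Or.inl ⟨a, ha, b*h, H.mul_mem hb hh, by group⟩)
    · exact (hmemK _).2 (Or.inr ⟨a, ha, b*h, H.mul_mem hb hh, by group⟩)
  have hKinv : ∀ x ∈ KF, x⁻¹ ∈ KF := by
    intro x hx
    rcases (hmemK x).1 hx with ⟨a, ha, b, hb, rfl⟩ | ⟨a, ha, b, hb, rfl⟩
    · exact (hmemK _).2 (Or.inr ⟨b⁻¹, H.inv_mem hb, a⁻¹, H.inv_mem ha, by group⟩)
    · exact (hmemK _).2 (Or.inl ⟨b⁻¹, H.inv_mem hb, a⁻¹, H.inv_mem ha, by group⟩)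
  set E : Module.End ℝ S := nH⁻¹ • ∑ x ∈ KF, (ρ x : Module.End ℝ S) with hE
  have hEapp : ∀ v : S, E v = nH⁻¹ • ∑ x ∈ KF, ρ x v := by
    intro v
    rw [hE, LinearMap.smul_apply, LinearMap.coe_sum, Finset.sum_apply]
  have hρmul : ∀ (x y : G) (v : S), ρ x (ρ y v) = ρ (x * y) v := by
    intro x y v; rw [map_mul]; rfl
  have hρinv : ∀ (x : G) (v : S), ρ x (ρ x⁻¹ v) = v := by
    intro x v; rw [hρmul, mul_inv_cancel, map_one]; rfl
  have hρinv' : ∀ (x : G) (v : S), ρ x⁻¹ (ρ x v) = v := by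
    intro x v; rw [hρmul, inv_mul_cancel, map_one]; rfl
  -- moving `ρ` across the inner product
  have hmov : ∀ (x : G) (u v : S), ⟪ρ x u, v⟫_ℝ = ⟪u, ρ x⁻¹ v⟫_ℝ := by
    intro x u v
    conv_lhs => rw [← horth x⁻¹ (ρ x u) v, hρinv']
  have hmov' : ∀ (x : G) (u v : S), ⟪ρ x⁻¹ u, v⟫_ℝ = ⟪u, ρ x v⟫_ℝ := by
    intro x u v; simpa using hmov x⁻¹ u v
  have hinner_fix : ∀ a ∈ H, ∀ u : S, ⟪ρ a u, w⟫_ℝ = ⟪u, w⟫_ℝ := by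
    intro a ha u
    conv_lhs => rw [← hwfix a ha]
    rw [horth]
  have hipK : ∀ x ∈ KF, ⟪ρ x w, w⟫_ℝ = ⟪ρ g w, w⟫_ℝ := by
    intro x hx
    have hginv : ⟪ρ g⁻¹ w, w⟫_ℝ = ⟪ρ g w, w⟫_ℝ := by
      rw [← horth g (ρ g⁻¹ w) w, hρinv, real_inner_comm]
    rcases (hmemK x).1 hx with ⟨a, ha, b, hb, rfl⟩ | ⟨a, ha, b, hb, rfl⟩
    · rw [← hρmul, ← hρmul, hwfix b hb, hinner_fix a ha]
    · rw [← hρmul, ← hρmul, hwfix b hb, hinner_fix a ha, hginv]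
  have hEip : ⟪E w, w⟫_ℝ = (KF.card : ℝ) / nH * ⟪ρ g w, w⟫_ℝ := by
    rw [hEapp, real_inner_smul_left, sum_inner]
    rw [Finset.sum_congr rfl hipK, Finset.sum_const, nsmul_eq_mul]
    ring
  have hEfix : ∀ h ∈ H, ρ h (E w) = E w := by
    intro h hh
    rw [hEapp, map_smul, map_sum]
    congr 1
    have h1 : ∀ x ∈ KF, ρ h (ρ x w) = ρ (h * x) w := fun x _ => hρmul h x w
    rw [Finset.sum_congr rfl h1]
    refine Finset.sum_equiv (Equiv.mulLeft h) (fun x => ?_) (fun x _ => ?_)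
    · simp only [Equiv.coe_mulLeft]
      exact ⟨fun hx => hKl h hh x hx,
        fun hx => by simpa using hKl h⁻¹ (H.inv_mem hh) _ hx⟩
    · simp only [Equiv.coe_mulLeft]
  have hEsym : ∀ u v : S, ⟪E u, v⟫_ℝ = ⟪u, E v⟫_ℝ := by
    intro u v
    rw [hEapp, hEapp, real_inner_smul_left, real_inner_smul_right, sum_inner, inner_sum]
    congr 1
    rw [Finset.sum_congr rfl (fun x _ => hmov x u v)]
    refine Finset.sum_equiv (Equiv.inv G) (fun x => ?_) (fun x _ => ?_)
    · simp only [Equiv.inv_apply]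
      exact ⟨fun hx => hKinv x hx, fun hx => by simpa using hKinv _ hx⟩
    · simp only [Equiv.inv_apply]
  obtain ⟨d, hdcomm, hdw⟩ := hspan (E w) hEfix
  have hdcomm' : ∀ (x : G) (v : S), d (ρ x v) = ρ x (d v) := by
    intro x v
    have h := hdcomm x
    calc d (ρ x v) = (d ∘ₗ ρ x) v := rfl
      _ = (ρ x ∘ₗ d) v := by rw [h]
      _ = ρ x (d v) := rfl
  set d' : Module.End ℝ S := LinearMap.adjoint d with hd'
  have hd'adj_l : ∀ u v : S, ⟪d' u, v⟫_ℝ = ⟪u, d v⟫_ℝ := by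
    intro u v; rw [hd']; exact LinearMap.adjoint_inner_left d v u
  have hd'adj_r : ∀ u v : S, ⟪u, d' v⟫_ℝ = ⟪d u, v⟫_ℝ := by
    intro u v; rw [hd']; exact LinearMap.adjoint_inner_right d u v
  have hd'comm' : ∀ (x : G) (v : S), d' (ρ x v) = ρ x (d' v) := by
    intro x v
    refine ext_inner_left ℝ (fun u => ?_)
    calc ⟪u, d' (ρ x v)⟫_ℝ = ⟪d u, ρ x v⟫_ℝ := hd'adj_r u (ρ x v)
      _ = ⟪ρ x⁻¹ (d u), v⟫_ℝ := (hmov' x _ v).symm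
      _ = ⟪d (ρ x⁻¹ u), v⟫_ℝ := by rw [hdcomm']
      _ = ⟪ρ x⁻¹ u, d' v⟫_ℝ := (hd'adj_r _ _).symm
      _ = ⟪u, ρ x (d' v)⟫_ℝ := hmov' x u (d' v)
  set s : Module.End ℝ S := (2:ℝ)⁻¹ • (d + d') with hs
  have hsapp : ∀ v, s v = (2:ℝ)⁻¹ • (d v + d' v) := by
    intro v; rw [hs, LinearMap.smul_apply, LinearMap.add_apply]
  have hscomm' : ∀ (x : G) (v : S), s (ρ x v) = ρ x (s v) := by
    intro x v
    rw [hsapp, hsapp, hdcomm', hd'comm', map_smul, map_add]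
  have hssym : LinearMap.IsSymmetric s := by
    intro u v
    rw [hsapp, hsapp, real_inner_smul_left, real_inner_smul_right,
      inner_add_left, inner_add_right, hd'adj_l, hd'adj_r]
    ring
  obtain ⟨σ, hσ⟩ : ∃ σ : ℝ, Module.End.HasEigenvalue s σ :=
    ⟨_, hssym.hasEigenvalue_iSup_of_finiteDimensional⟩
  have hseig : ∀ v : S, s v = σ • v := by
    have hV : ∀ x : G, ∀ v ∈ Module.End.eigenspace s σ, ρ x v ∈ Module.End.eigenspace s σ := by
      intro x v hv
      rw [Module.End.mem_eigenspace_iff] at hv ⊢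
      rw [hscomm', hv, map_smul]
    rcases hsimple _ hV with hbot | htop
    · exact absurd hbot hσ
    · intro v
      have hv : v ∈ Module.End.eigenspace s σ := htop ▸ Submodule.mem_top
      exact Module.End.mem_eigenspace_iff.1 hv
  set k : Module.End ℝ S := d - s with hk
  have hkapp : ∀ v, k v = d v - s v := by
    intro v; rw [hk, LinearMap.sub_apply]
  have h2s : ∀ v, s v + s v = d v + d' v := by
    intro v
    rw [hsapp, ← two_smul ℝ ((2:ℝ)⁻¹ • (d v + d' v)), smul_smul]
    norm_num
  have hkskew : ∀ u v : S, ⟪k u, v⟫_ℝ + ⟪u, k v⟫_ℝ = 0 := by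
    intro u v
    have e1 : ⟪k u, v⟫_ℝ = ⟪d u, v⟫_ℝ - ⟪s u, v⟫_ℝ := by rw [hkapp, inner_sub_left]
    have e2 : ⟪u, k v⟫_ℝ = ⟪d' u, v⟫_ℝ - ⟪u, s v⟫_ℝ := by
      rw [hkapp, inner_sub_right, ← hd'adj_l]
    have e3 : ⟪s u, v⟫_ℝ = ⟪u, s v⟫_ℝ := hssym u v
    have e4 : ⟪d u, v⟫_ℝ + ⟪d' u, v⟫_ℝ = ⟪s u, v⟫_ℝ + ⟪s u, v⟫_ℝ := by
      rw [← inner_add_left, ← inner_add_left, h2s]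
    linarith
  have hwk : ⟪w, k w⟫_ℝ = 0 := by
    have h := hkskew w w
    have h' : ⟪k w, w⟫_ℝ = ⟪w, k w⟫_ℝ := real_inner_comm _ _
    linarith
  have hcomE : ∀ (f : Module.End ℝ S), (∀ (x : G) (u : S), f (ρ x u) = ρ x (f u)) →
      ∀ v, f (E v) = E (f v) := by
    intro f hf v
    rw [hEapp, map_smul, map_sum, hEapp]
    congr 1
    exact Finset.sum_congr rfl (fun x _ => hf x v)
  have hkcomm' : ∀ (x : G) (u : S), k (ρ x u) = ρ x (k u) := by
    intro x u
    rw [hkapp, hkapp, hdcomm', hscomm', map_sub]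
  have hkE : ∀ v, E (k v) = k (E v) := fun v => (hcomE k hkcomm' v).symm
  have hdwk : ⟪d w, k w⟫_ℝ = 0 := by
    have c1 : ⟪d w, k w⟫_ℝ = ⟪w, k (d w)⟫_ℝ := by
      rw [← hdw, hEsym w (k w), hkE]
    have c2 : ⟪w, k (d w)⟫_ℝ = -⟪k w, d w⟫_ℝ := by
      have h := hkskew w (d w); linarith
    have c3 : ⟪k w, d w⟫_ℝ = ⟪d w, k w⟫_ℝ := real_inner_comm _ _
    linarith
  have hdk : d w = s w + k w := by
    rw [hkapp]; abel
  have hkw : k w = 0 := by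
    have h : ⟪d w, k w⟫_ℝ = σ * ⟪w, k w⟫_ℝ + ⟪k w, k w⟫_ℝ := by
      rw [hdk, inner_add_left, hseig w, real_inner_smul_left]
    rw [hdwk, hwk, mul_zero, zero_add] at h
    exact inner_self_eq_zero.1 h.symm
  have hEwσ : E w = σ • w := by
    rw [hdw, hdk, hkw, add_zero, hseig]
  have hσval : ⟪E w, w⟫_ℝ = σ := by
    rw [hEwσ, real_inner_smul_left, hnorm, mul_one]
  have hσeq : (KF.card : ℝ) / nH * ⟪ρ g w, w⟫_ℝ = σ := hEip.symm.trans hσval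
  -- Integrality of σ via the Hecke-algebra finiteness argument
  set gen : G → Module.End ℝ S := fun x => nH⁻¹ • (ρ x : Module.End ℝ S) with hgen
  have hgenmul : ∀ x y : G, (ρ x : Module.End ℝ S) * gen y = gen (x * y) := by
    intro x y
    rw [hgen]
    simp only
    rw [mul_smul_comm, ← map_mul]
  have hpow : ∀ j : ℕ, ∃ n : G → ℤ, (∀ h ∈ H, ∀ x : G, n (h * x) = n x) ∧
      (E ^ (j+1) : Module.End ℝ S) = ∑ x : G, n x • gen x := by
    intro j
    induction j with
    | zero =>
      refine ⟨fun x => if x ∈ KF then 1 else 0, ?_, ?_⟩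
      · intro h hh x
        show (if h * x ∈ KF then (1:ℤ) else 0) = (if x ∈ KF then (1:ℤ) else 0)
        by_cases hx : x ∈ KF
        · rw [if_pos hx, if_pos (hKl h hh x hx)]
        · rw [if_neg hx, if_neg (fun hc => hx (by simpa using hKl h⁻¹ (H.inv_mem hh) _ hc))]
      · have lhs : (E : Module.End ℝ S) = ∑ x ∈ KF, gen x := by
          rw [hE, Finset.smul_sum]
        have rhs : (∑ x : G, (if x ∈ KF then (1:ℤ) else 0) • gen x) = ∑ x ∈ KF, gen x := by
          have h1 : ∀ x : G, ((if x ∈ KF then (1:ℤ) else 0) • gen x)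
              = if x ∈ KF then gen x else 0 := by
            intro x; split <;> simp
          rw [Finset.sum_congr rfl (fun x _ => h1 x), Finset.sum_ite_mem, Finset.univ_inter]
        rw [pow_one, lhs, rhs]
    | succ j ih =>
      obtain ⟨n, hninv, hnE⟩ := ih
      have hKr' : ∀ y ∈ KF, ∀ h ∈ HF, y * h ∈ KF := fun y hy h hh => hKr y hy h ((hmemH h).1 hh)
      have hdvd : ∀ z : G, (HF.card : ℤ) ∣ ∑ y ∈ KF, n (y⁻¹ * z) := by
        intro z
        refine coset_sum_dvd HF h1H hclH (fun y => n (y⁻¹ * z)) ?_ KF hKr'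
        intro y h hh
        show n ((y * h)⁻¹ * z) = n (y⁻¹ * z)
        have he : (y * h)⁻¹ * z = h⁻¹ * (y⁻¹ * z) := by group
        rw [he, hninv h⁻¹ (H.inv_mem ((hmemH h).1 hh))]
      set m : G → ℤ := fun z => (∑ y ∈ KF, n (y⁻¹ * z)) / (HF.card : ℤ) with hm
      have hmc : ∀ z, (HF.card : ℤ) * m z = ∑ y ∈ KF, n (y⁻¹ * z) := fun z =>
        Int.mul_ediv_cancel' (hdvd z)
      have hcinv : ∀ h ∈ H, ∀ x : G,
          (∑ y ∈ KF, n (y⁻¹ * (h * x))) = ∑ y ∈ KF, n (y⁻¹ * x) := by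
        intro h hh x
        refine Finset.sum_equiv (Equiv.mulLeft h⁻¹) (fun y => ?_) (fun y _ => ?_)
        · simp only [Equiv.coe_mulLeft]
          exact ⟨fun hy => hKl h⁻¹ (H.inv_mem hh) y hy,
            fun hy => by simpa using hKl h hh _ hy⟩
        · simp only [Equiv.coe_mulLeft]
          congr 1
          group
      refine ⟨m, ?_, ?_⟩
      · intro h hh x
        rw [hm]
        simp only
        rw [hcinv h hh x]
      · have step1 : (E ^ (j+1+1) : Module.End ℝ S) = E * E ^ (j+1) := by rw [pow_succ']
        rw [step1, hnE, hE, smul_mul_assoc, Finset.sum_mul]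
        have inner1 : ∀ y : G, (ρ y : Module.End ℝ S) * (∑ x : G, n x • gen x)
            = ∑ z : G, n (y⁻¹ * z) • gen z := by
          intro y
          rw [Finset.mul_sum]
          have h1 : ∀ x : G, (ρ y : Module.End ℝ S) * (n x • gen x) = n x • gen (y * x) := by
            intro x; rw [mul_smul_comm, hgenmul]
          rw [Finset.sum_congr rfl (fun x _ => h1 x)]
          refine Finset.sum_equiv (Equiv.mulLeft y) (fun x => by simp) (fun x _ => ?_)
          simp only [Equiv.coe_mulLeft, inv_mul_cancel_left]
        rw [Finset.sum_congr rfl (fun y _ => inner1 y), Finset.sum_comm, Finset.smul_sum]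
        refine Finset.sum_congr rfl ?_
        intro z _
        rw [← Finset.sum_smul, ← hmc z]
        rw [show (((HF.card : ℤ) * m z) • gen z) = (((HF.card : ℤ) * m z : ℤ) : ℝ) • gen z from
          (Int.cast_smul_eq_zsmul ℝ _ _).symm]
        rw [smul_smul]
        rw [show ((m z • gen z : Module.End ℝ S)) = ((m z : ℤ) : ℝ) • gen z from
          (Int.cast_smul_eq_zsmul ℝ _ _).symm]
        congr 1
        push_cast
        rw [← hnH]
        field_simp
  set Λ₀ : Submodule ℤ (Module.End ℝ S) := Submodule.span ℤ (Set.range gen) with hΛ₀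
  have hpowmem : ∀ j : ℕ, (E ^ (j+1) : Module.End ℝ S) ∈ Λ₀ := by
    intro j
    obtain ⟨n, -, hnE⟩ := hpow j
    rw [hnE]
    exact Submodule.sum_mem _ (fun x _ =>
      Submodule.smul_mem _ _ (Submodule.subset_span ⟨x, rfl⟩))
  set Λ₁ : Submodule ℤ (Module.End ℝ S) := Λ₀ ⊔ Submodule.span ℤ {(1 : Module.End ℝ S)}
    with hΛ₁
  have hΛ₁fg : Λ₁.FG :=
    Submodule.FG.sup (Submodule.fg_span (Set.finite_range gen))
      (Submodule.fg_span (Set.finite_singleton _))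
  have hadjle : Subalgebra.toSubmodule (Algebra.adjoin ℤ {(E : Module.End ℝ S)}) ≤ Λ₁ := by
    intro T hT
    have hT' : T ∈ Algebra.adjoin ℤ {(E : Module.End ℝ S)} := hT
    rw [Algebra.adjoin_singleton_eq_range_aeval] at hT'
    obtain ⟨p, hp⟩ := hT'
    rw [← hp]
    clear hp hT
    show (Polynomial.aeval (E : Module.End ℝ S)) p ∈ Λ₁
    induction p using Polynomial.induction_on' with
    | add p q hp hq => rw [map_add]; exact Λ₁.add_mem hp hq
    | monomial i a =>
      rw [Polynomial.aeval_monomial, algebraMap_int_eq]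
      have h1 : ((Int.castRingHom (Module.End ℝ S)) a) * E ^ i = a • E ^ i := by
        show ((a : ℤ) : Module.End ℝ S) * E ^ i = a • E ^ i
        rw [← zsmul_eq_mul]
      rw [h1]
      cases i with
      | zero =>
        refine Submodule.smul_mem _ a ?_
        rw [pow_zero]
        exact Submodule.mem_sup_right (Submodule.subset_span rfl)
      | succ i' =>
        exact Submodule.smul_mem _ a (Submodule.mem_sup_left (hpowmem i'))
  have hAfg : (Subalgebra.toSubmodule (Algebra.adjoin ℤ {(E : Module.End ℝ S)})).FG := by
    haveI := isNoetherian_of_fg_of_noetherian Λ₁ hΛ₁fg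
    have h1 : (Submodule.comap Λ₁.subtype
        (Subalgebra.toSubmodule (Algebra.adjoin ℤ {(E : Module.End ℝ S)}))).FG :=
      IsNoetherian.noetherian _
    have h2 := h1.map Λ₁.subtype
    rw [Submodule.map_comap_subtype, inf_eq_right.2 hadjle] at h2
    exact h2
  have hEint : IsIntegral ℤ (E : Module.End ℝ S) :=
    IsIntegral.of_mem_of_fg _ hAfg _ (Algebra.self_mem_adjoin_singleton ℤ _)
  obtain ⟨p, hpm, hpE⟩ := hEint
  have hEpoww : ∀ i : ℕ, (E ^ i : Module.End ℝ S) w = σ ^ i • w := by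
    intro i
    induction i with
    | zero => simp
    | succ i ih =>
      rw [pow_succ', Module.End.mul_apply, ih, map_smul, hEwσ, smul_smul, pow_succ]
  have haev : ∀ q : Polynomial ℤ,
      (Polynomial.aeval (E : Module.End ℝ S) q) w = (Polynomial.aeval σ q) • w := by
    intro q
    induction q using Polynomial.induction_on' with
    | add q r hq hr => rw [map_add, map_add, LinearMap.add_apply, hq, hr, add_smul]
    | monomial i a =>
      have l1 : (Polynomial.aeval (E : Module.End ℝ S)) (Polynomial.monomial i a)
          = a • (E ^ i : Module.End ℝ S) := by
        rw [Polynomial.aeval_monomial, algebraMap_int_eq]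
        show ((a : ℤ) : Module.End ℝ S) * E ^ i = a • E ^ i
        rw [← zsmul_eq_mul]
      have l2 : (Polynomial.aeval σ) (Polynomial.monomial i a) = (a : ℝ) * σ ^ i := by
        rw [Polynomial.aeval_monomial, algebraMap_int_eq]
        simp
      rw [l1, l2, LinearMap.smul_apply, hEpoww, mul_smul, Int.cast_smul_eq_zsmul]
  have hσ0 : (Polynomial.aeval σ) p = 0 := by
    have h := haev p
    rw [← Polynomial.aeval_def] at hpE
    rw [hpE, LinearMap.zero_apply] at h
    rcases smul_eq_zero.1 h.symm with h' | h'
    · exact h'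
    · exact absurd h' hw0
  have hσint : IsIntegral ℤ σ := ⟨p, hpm, by rwa [← Polynomial.aeval_def]⟩
  -- translate the cardinalities
  have hcards : ((Nat.card ↥KS : ℕ) : ℝ) = (KF.card : ℝ) := by
    rw [hKF, Set.toFinset_card, Nat.card_eq_fintype_card]
  have hcardH : ((Nat.card ↥H : ℕ) : ℝ) = nH := by
    rw [hnH, hHF, Set.toFinset_card]
    congr 1
    rw [Nat.card_eq_fintype_card]
    exact Fintype.card_congr (Equiv.refl _)
  constructor
  · rw [hcards, hcardH, hσeq]
    exact hσint
  · have ha0 : (KF.card : ℝ) ≠ 0 := by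
      have : 0 < KF.card := Finset.card_pos.2 ⟨g, hgK⟩
      exact_mod_cast this.ne'
    have hip : ⟪ρ g w, w⟫_ℝ = σ * nH / (KF.card : ℝ) := by
      rw [eq_div_iff ha0]
      field_simp at hσeq
      linear_combination hσeq
    rw [hip, div_eq_mul_inv]
    have h1 : IsAlgebraic ℚ σ := (IsIntegral.tower_top hσint (A := ℚ)).isAlgebraic
    have h2 : IsAlgebraic ℚ nH := by rw [hnH]; exact isAlgebraic_nat _
    have h3 : IsAlgebraic ℚ (((KF.card : ℝ))⁻¹) := IsAlgebraic.inv (isAlgebraic_nat _)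
    exact isAlgebraic_iff_isIntegral.2
      (((isAlgebraic_iff_isIntegral.1 h1).mul (isAlgebraic_iff_isIntegral.1 h2)).mul
        (isAlgebraic_iff_isIntegral.1 h3))
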